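/- Define M(ρ) = ∫_0^1 dξ / sqrt( (2/d) ∫_ξ^1 (f(ρη)/(ρη))·η dη ) for ρ ∈ (0,1). If f'(0)/d > (π/(2L))^2, then lim_{ρ→0^+} M(ρ) = sqrt(d/f'(0))·(π/2) < L. -/

import Mathlib

open Real Set Filter intervalIntegral MeasureTheory

lemma Jint : IntervalIntegrable (fun x : ℝ => 1 / Real.sqrt (1 - x ^ 2)) volume 0 1 := by
  have hbd : IntervalIntegrable (fun x : ℝ => (1 - x) ^ (-(1/2) : ℝ)) volume 0 1 := by
    have := (intervalIntegrable_rpow' (a := 0) (b := 1) (r := -(1/2)) (by norm_num)).comp_sub_left 1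
    simpa using this.symm
  rw [intervalIntegrable_iff_integrableOn_Ioc_of_le zero_le_one] at hbd ⊢
  have hmeas : Measurable fun x : ℝ => 1 / Real.sqrt (1 - x ^ 2) := by
    have : Measurable fun x : ℝ => Real.sqrt (1 - x ^ 2) :=
      continuous_sqrt.measurable.comp ((measurable_const.sub (measurable_id.pow_const 2)))
    exact measurable_const.div this
  refine hbd.mono' hmeas.aestronglyMeasurable ?_
  rw [ae_restrict_iff' measurableSet_Ioc]
  refine ae_of_all _ fun x hx => ?_
  rcases eq_or_lt_of_le hx.2 with h1 | h1
  · subst h1; norm_num [Real.zero_rpow]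
  · have h0 : 0 < x := hx.1
    have hx2 : 0 < 1 - x := by linarith
    have h1x2 : Real.sqrt (1 - x) ≤ Real.sqrt (1 - x ^ 2) := by
      apply Real.sqrt_le_sqrt; nlinarith
    have hs : 0 < Real.sqrt (1 - x) := Real.sqrt_pos.2 hx2
    have : (1 - x) ^ (-(1/2) : ℝ) = 1 / Real.sqrt (1 - x) := by
      rw [Real.rpow_neg hx2.le, Real.sqrt_eq_rpow]; norm_num
    rw [this, norm_of_nonneg (by positivity)]
    exact one_div_le_one_div_of_le hs h1x2

lemma Jval : ∫ x in (0:ℝ)..1, 1 / Real.sqrt (1 - x ^ 2) = π / 2 := by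
  have := intervalIntegral.integral_eq_sub_of_hasDerivAt_of_le zero_le_one
    (Real.continuous_arcsin.continuousOn)
    (fun x hx => Real.hasDerivAt_arcsin (by linarith [hx.1]) (ne_of_lt hx.2)) Jint
  rw [this, Real.arcsin_one, Real.arcsin_zero, sub_zero]

lemma inv_sqrt_eq (t d P : ℝ) (ht : 0 < t) (hd : 0 < d) (hP : 0 < P) :
    1 / Real.sqrt (t * P / d) = Real.sqrt (d / t) * (1 / Real.sqrt P) := by
  rw [show t * P / d = (t / d) * P by ring, Real.sqrt_mul (by positivity), one_div, mul_inv,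
    ← Real.sqrt_inv, inv_div, one_div]

lemma main_bound (d c ε δ : ℝ) (hd : 0 < d) (hc : 0 < c) (hεc : ε < c)
    (f : ℝ → ℝ) (hfc : Continuous f) (hf0 : f 0 = 0)
    (hup : ∀ s ∈ Ioo (0:ℝ) 1, 0 < f s ∧ f s < c * s)
    (hlow : ∀ s : ℝ, 0 < s → s < δ → c - ε ≤ f s / s)
    (ρ : ℝ) (hρ0 : 0 < ρ) (hρ1 : ρ < 1) (hρδ : ρ < δ) :
    Real.sqrt (d / c) * (π / 2) ≤
      (∫ ξ in (0:ℝ)..1, 1 / Real.sqrt ((2 / d) * ∫ η in ξ..1, (f (ρ * η) / (ρ * η)) * η)) ∧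
    (∫ ξ in (0:ℝ)..1, 1 / Real.sqrt ((2 / d) * ∫ η in ξ..1, (f (ρ * η) / (ρ * η)) * η)) ≤
      Real.sqrt (d / (c - ε)) * (π / 2) := by
  have hcε : 0 < c - ε := by linarith
  have hd' : d ≠ 0 := ne_of_gt hd
  set h : ℝ → ℝ := fun η => f (ρ * η) / (ρ * η) * η with hh
  -- pointwise bounds on the inner integrand
  have hpt : ∀ η ∈ Icc (0:ℝ) 1, (c - ε) * η ≤ h η ∧ h η ≤ c * η := by
    intro η hη
    rcases eq_or_lt_of_le hη.1 with h0 | h0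
    · rw [hh]; simp only [← h0, mul_zero, hf0]; norm_num
    · have hs0 : 0 < ρ * η := mul_pos hρ0 h0
      have hs1 : ρ * η < 1 := by nlinarith [hη.2]
      obtain ⟨hf1, hf2⟩ := hup _ ⟨hs0, hs1⟩
      constructor
      · have hlo := hlow (ρ * η) hs0 (by nlinarith [hη.2])
        exact mul_le_mul_of_nonneg_right hlo h0.le
      · have : f (ρ * η) / (ρ * η) ≤ c := by
          rw [div_le_iff₀ hs0]; nlinarith
        exact mul_le_mul_of_nonneg_right this h0.le
  have hmeash : Measurable h := by
    have h1 : Measurable fun η : ℝ => f (ρ * η) :=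
      (hfc.comp (continuous_const.mul continuous_id)).measurable
    have h2 : Measurable fun η : ℝ => ρ * η := (continuous_const.mul continuous_id).measurable
    exact (h1.div h2).mul measurable_id
  have hint : IntegrableOn h (Icc 0 1) volume := by
    refine Integrable.mono' (integrable_const c) hmeash.aestronglyMeasurable ?_
    rw [ae_restrict_iff' measurableSet_Icc]
    refine ae_of_all _ fun η hη => ?_
    obtain ⟨hb1, hb2⟩ := hpt η hη
    have h0 : 0 ≤ h η := le_trans (by nlinarith [hη.1]) hb1
    rw [norm_of_nonneg h0]; nlinarith [hη.1, hη.2]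
  set H : ℝ → ℝ := fun ξ => ∫ η in ξ..1, h η with hH
  have hHint : ∀ ξ ∈ Icc (0:ℝ) 1, IntervalIntegrable h volume ξ 1 := fun ξ hξ =>
    (hint.mono_set (by rw [uIcc_of_le hξ.2]; exact Icc_subset_Icc hξ.1 le_rfl)).intervalIntegrable
  have hHbounds : ∀ ξ ∈ Icc (0:ℝ) 1,
      (c - ε) * ((1 - ξ ^ 2) / 2) ≤ H ξ ∧ H ξ ≤ c * ((1 - ξ ^ 2) / 2) := by
    intro ξ hξ
    have e1 : ∫ η in ξ..1, (c - ε) * η = (c - ε) * ((1 - ξ ^ 2) / 2) := by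
      rw [intervalIntegral.integral_const_mul, integral_id]; ring
    have e2 : ∫ η in ξ..1, c * η = c * ((1 - ξ ^ 2) / 2) := by
      rw [intervalIntegral.integral_const_mul, integral_id]; ring
    have hsub : ∀ η ∈ Icc ξ 1, η ∈ Icc (0:ℝ) 1 := fun η hη => ⟨le_trans hξ.1 hη.1, hη.2⟩
    constructor
    · rw [← e1]
      exact intervalIntegral.integral_mono_on hξ.2
        ((continuous_const.mul continuous_id).intervalIntegrable _ _) (hHint ξ hξ)
        (fun η hη => (hpt η (hsub η hη)).1)
    · rw [← e2]
      exact intervalIntegral.integral_mono_on hξ.2 (hHint ξ hξ)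
        ((continuous_const.mul continuous_id).intervalIntegrable _ _)
        (fun η hη => (hpt η (hsub η hη)).2)
  have hHcont : ContinuousOn H (Icc 0 1) := by
    have := continuousOn_primitive_interval_left (a := (0:ℝ)) (b := (1:ℝ)) (μ := volume)
      (f := h) (by rwa [uIcc_of_le zero_le_one])
    rwa [uIcc_of_le zero_le_one] at this
  set g : ℝ → ℝ := fun ξ => 1 / Real.sqrt ((2 / d) * H ξ) with hg
  have hgpt : ∀ ξ ∈ Icc (0:ℝ) 1,
      Real.sqrt (d / c) * (1 / Real.sqrt (1 - ξ ^ 2)) ≤ g ξ ∧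
      g ξ ≤ Real.sqrt (d / (c - ε)) * (1 / Real.sqrt (1 - ξ ^ 2)) := by
    intro ξ hξ
    rcases eq_or_lt_of_le hξ.2 with h1 | h1
    · subst h1
      have : H 1 = 0 := intervalIntegral.integral_same
      rw [hg]; simp [this]
    · have hP : 0 < 1 - ξ ^ 2 := by nlinarith [hξ.1]
      obtain ⟨hb1, hb2⟩ := hHbounds ξ hξ
      have h2d : (0:ℝ) < 2 / d := by positivity
      have hlo : (c - ε) * (1 - ξ ^ 2) / d ≤ (2 / d) * H ξ := by
        have := mul_le_mul_of_nonneg_left hb1 h2d.le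
        calc (c - ε) * (1 - ξ ^ 2) / d = (2 / d) * ((c - ε) * ((1 - ξ ^ 2) / 2)) := by
              field_simp
          _ ≤ (2 / d) * H ξ := this
      have hhi : (2 / d) * H ξ ≤ c * (1 - ξ ^ 2) / d := by
        have := mul_le_mul_of_nonneg_left hb2 h2d.le
        calc (2 / d) * H ξ ≤ (2 / d) * (c * ((1 - ξ ^ 2) / 2)) := this
          _ = c * (1 - ξ ^ 2) / d := by field_simp
      have hlopos : 0 < (c - ε) * (1 - ξ ^ 2) / d := by positivity
      have hsq : 0 < Real.sqrt ((2 / d) * H ξ) :=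
        Real.sqrt_pos.2 (lt_of_lt_of_le hlopos hlo)
      constructor
      · rw [← inv_sqrt_eq c d (1 - ξ ^ 2) hc hd hP]
        exact one_div_le_one_div_of_le hsq (Real.sqrt_le_sqrt hhi)
      · rw [← inv_sqrt_eq (c - ε) d (1 - ξ ^ 2) hcε hd hP]
        exact one_div_le_one_div_of_le (Real.sqrt_pos.2 hlopos) (Real.sqrt_le_sqrt hlo)
  have hl_int : IntervalIntegrable (fun ξ : ℝ => Real.sqrt (d / c) * (1 / Real.sqrt (1 - ξ ^ 2)))
      volume 0 1 := Jint.const_mul _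
  have hu_int : IntervalIntegrable
      (fun ξ : ℝ => Real.sqrt (d / (c - ε)) * (1 / Real.sqrt (1 - ξ ^ 2))) volume 0 1 :=
    Jint.const_mul _
  have hg_meas : AEStronglyMeasurable g (volume.restrict (Ioc 0 1)) := by
    have hHm : AEMeasurable H (volume.restrict (Ioc 0 1)) :=
      (hHcont.aemeasurable measurableSet_Icc).mono_measure
        (Measure.restrict_mono Ioc_subset_Icc_self le_rfl)
    have hout : Measurable fun y : ℝ => 1 / Real.sqrt ((2 / d) * y) :=
      measurable_const.div (continuous_sqrt.measurable.comp (measurable_const_mul _))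
    exact (hout.comp_aemeasurable hHm).aestronglyMeasurable
  have hg_int : IntervalIntegrable g volume 0 1 := by
    rw [intervalIntegrable_iff_integrableOn_Ioc_of_le zero_le_one]
    have hu_int' := (intervalIntegrable_iff_integrableOn_Ioc_of_le zero_le_one).1 hu_int
    refine hu_int'.mono' hg_meas ?_
    rw [ae_restrict_iff' measurableSet_Ioc]
    refine ae_of_all _ fun ξ hξ => ?_
    have := (hgpt ξ ⟨hξ.1.le, hξ.2⟩).2
    rw [norm_of_nonneg (by rw [hg]; positivity)]
    exact this
  have low := intervalIntegral.integral_mono_on zero_le_one hl_int hg_int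
    (fun ξ hξ => (hgpt ξ hξ).1)
  have high := intervalIntegral.integral_mono_on zero_le_one hg_int hu_int
    (fun ξ hξ => (hgpt ξ hξ).2)
  rw [intervalIntegral.integral_const_mul, Jval] at low high
  exact ⟨low, high⟩

theorem stmt_4 (d L : ℝ) (hd : 0 < d) (hL : 0 < L)
    (f : ℝ → ℝ) (hf : ContDiff ℝ 1 f) (hf0 : f 0 = 0)
    (hfpos : ∀ s ∈ Set.Ioo (0:ℝ) 1, 0 < f s ∧ f s < deriv f 0 * s)
    (M : ℝ → ℝ)
    (hM : ∀ ρ ∈ Set.Ioo (0:ℝ) 1,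
      M ρ = ∫ ξ in (0:ℝ)..1, 1 / Real.sqrt ((2 / d) * ∫ η in ξ..1, (f (ρ * η) / (ρ * η)) * η))
    (hcond : deriv f 0 / d > (Real.pi / (2 * L)) ^ 2) :
    Tendsto M (nhdsWithin 0 (Set.Ioi 0))
      (nhds (Real.sqrt (d / deriv f 0) * (Real.pi / 2))) ∧
    Real.sqrt (d / deriv f 0) * (Real.pi / 2) < L := by
  set c := deriv f 0 with hc_def
  have hπ := Real.pi_pos
  have hc : 0 < c := by
    have h2 := hfpos (1/2) (by norm_num)
    nlinarith [h2.1, h2.2]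
  -- slope limit
  have hder : HasDerivAt f c 0 := ((hf.differentiable one_ne_zero) 0).hasDerivAt
  have hslope : Tendsto (fun s => f s / s) (nhdsWithin 0 (Ioi 0)) (nhds c) := by
    have h1 := hasDerivAt_iff_tendsto_slope.1 hder
    have h2 : Tendsto (slope f 0) (nhdsWithin 0 (Ioi 0)) (nhds c) :=
      h1.mono_left (nhdsWithin_mono _ (fun x hx => ne_of_gt hx))
    refine h2.congr fun s => ?_
    simp [slope_def_field, hf0]
  -- part 2
  have hA : Real.sqrt (d / c) * (π / 2) < L := by
    have ha2 : Real.sqrt (d / c) ^ 2 = d / c := Real.sq_sqrt (by positivity)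
    have ha0 : 0 ≤ Real.sqrt (d / c) := Real.sqrt_nonneg _
    rw [gt_iff_lt, div_pow, div_lt_div_iff₀ (by positivity) hd] at hcond
    have h4 : Real.sqrt (d / c) ^ 2 * c = d := by
      rw [ha2]; field_simp
    have h5 : π ^ 2 * (Real.sqrt (d / c) ^ 2 * c) < c * (2 * L) ^ 2 := by
      rw [h4]; exact hcond
    have h6 : π ^ 2 * Real.sqrt (d / c) ^ 2 < (2 * L) ^ 2 :=
      lt_of_mul_lt_mul_right (by nlinarith [h5]) hc.le
    have h7 : 0 ≤ Real.sqrt (d / c) * π + 2 * L := by positivity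
    nlinarith [h6, h7]
  refine ⟨?_, hA⟩
  rw [Metric.tendsto_nhdsWithin_nhds]
  intro ε' hε'
  obtain ⟨ε, hεpos, hεc2, hbd⟩ : ∃ ε : ℝ, 0 < ε ∧ ε < c ∧
      Real.sqrt (d / (c - ε)) * (π / 2) < Real.sqrt (d / c) * (π / 2) + ε' := by
    have hcont : ContinuousAt (fun t : ℝ => Real.sqrt (d / t) * (π / 2)) c := by
      have h1 : ContinuousAt (fun t : ℝ => d / t) c :=
        continuousAt_const.div continuousAt_id (ne_of_gt hc)
      exact (Real.continuous_sqrt.continuousAt.comp h1).mul continuousAt_const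
    have hsub : Tendsto (fun e : ℝ => c - e) (nhdsWithin 0 (Ioi 0)) (nhds c) := by
      have h0 : Tendsto (fun e : ℝ => c - e) (nhds 0) (nhds (c - 0)) :=
        (continuous_const.sub continuous_id).tendsto 0
      simpa using h0.mono_left nhdsWithin_le_nhds
    have h1 : ∀ᶠ e in nhdsWithin 0 (Ioi 0),
        Real.sqrt (d / (c - e)) * (π / 2) < Real.sqrt (d / c) * (π / 2) + ε' :=
      (hcont.tendsto.comp hsub).eventually_lt_const (by linarith)
    have h2 : ∀ᶠ e in nhdsWithin 0 (Ioi 0), e < c :=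
      eventually_of_mem (Ioo_mem_nhdsGT_of_mem ⟨le_refl 0, hc⟩) (fun x hx => hx.2)
    have h3 : ∀ᶠ e in nhdsWithin (0:ℝ) (Ioi 0), (0:ℝ) < e :=
      eventually_of_mem self_mem_nhdsWithin (fun x hx => hx)
    obtain ⟨ε, he⟩ := (h1.and (h2.and h3)).exists
    exact ⟨ε, he.2.2, he.2.1, he.1⟩
  obtain ⟨δ₀, hδ₀, hδprop⟩ := Metric.tendsto_nhdsWithin_nhds.1 hslope ε hεpos
  refine ⟨min δ₀ 1, by positivity, ?_⟩
  intro ρ hρ hρd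
  have hρ0 : 0 < ρ := hρ
  rw [Real.dist_eq, sub_zero, abs_of_pos hρ0] at hρd
  have hρδ0 : ρ < δ₀ := lt_of_lt_of_le hρd (min_le_left _ _)
  have hρ1 : ρ < 1 := lt_of_lt_of_le hρd (min_le_right _ _)
  have hlow : ∀ s : ℝ, 0 < s → s < δ₀ → c - ε ≤ f s / s := by
    intro s hs hsδ
    have := hδprop (mem_Ioi.2 hs) (by rw [Real.dist_eq, sub_zero, abs_of_pos hs]; exact hsδ)
    rw [Real.dist_eq] at this
    have := abs_lt.1 this
    linarith [this.1]
  obtain ⟨l, u⟩ := main_bound d c ε δ₀ hd hc hεc2 f hf.continuous hf0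
    (fun s hs => hfpos s hs) hlow ρ hρ0 hρ1 hρδ0
  rw [Real.dist_eq, hM ρ ⟨hρ0, hρ1⟩]
  rw [abs_lt]
  constructor <;> linarith
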